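/- Let n ≥ 2 be an integer and let N be an abelian group of order 2^n. Suppose that the holomorph Hol(N) contains a regular subgroup isomorphic to the generalised quaternion group Q_{2^n} or to the dihedral group D_{2^n} of order 2^n. Then N is isomorphic to one of the following groups: C_{2^n}; C_2 × C_{2^{n-1}}; C_4 × C_{2^{n-2}} (only possible when n ≥ 3); C_2 × C_2 × C_{2^{n-2}} (only possible when n ≥ 3); C_2 × C_2 × C_2 × C_{2^{n-3}} (only possible when n ≥ 4). -/

import Mathlib

section Aux
variable {N : Type} [AddCommGroup N]

/-- The natural action of `AddAut N` on `Multiplicative N`. -/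
def holPhi (N : Type) [AddCommGroup N] : Multiplicative (AddAut N) →* MulAut (Multiplicative N) where
  toFun f := AddEquiv.toMultiplicative (Multiplicative.toAdd f)
  map_one' := by ext x; rfl
  map_mul' f g := by ext x; rfl

/-- The holomorph of an abelian group `N`, i.e. the semidirect product `N ⋊ Aut(N)`. -/
abbrev Hol (N : Type) [AddCommGroup N] :=
  SemidirectProduct (Multiplicative N) (Multiplicative (AddAut N)) (holPhi N)

/-- The action of the holomorph on `N`: `(v, A) • x = v + A x`. -/
def holSmul {N : Type} [AddCommGroup N] (g : Hol N) (x : N) : N :=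
  (Multiplicative.toAdd g.left) + (Multiplicative.toAdd g.right) x

/-- A subgroup of `Hol N` is regular if its action on `N` is simply transitive. -/
def IsRegularSubgroup {N : Type} [AddCommGroup N] (G : Subgroup (Hol N)) : Prop :=
  ∀ x y : N, ∃! g : G, holSmul (g : Hol N) x = y

/-- Theorem 3.4: the possible additive groups of a quaternion or dihedral brace of
order `2 ^ n`. -/


private lemma two_pow_dvd_choose {s i : ℕ} (h0 : 0 < i) (h1 : i ≤ 2 ^ s) :
    2 ^ (s - i.factorization 2) ∣ Nat.choose (2 ^ s) i := by
  set t := i.factorization 2 with ht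
  set u := i / 2 ^ t with hu
  have hmul : 2 ^ t * u = i := Nat.ordProj_mul_ordCompl_eq_self i 2
  have hodd : ¬ 2 ∣ u := Nat.not_dvd_ordCompl Nat.prime_two h0.ne'
  have hts : t ≤ s := by
    have h2 : 2 ^ t ≤ 2 ^ s :=
      le_trans (Nat.le_of_dvd h0 (Nat.ordProj_dvd i 2)) h1
    exact (Nat.pow_le_pow_iff_right one_lt_two).1 h2
  have key : 2 ^ s ∣ Nat.choose (2 ^ s) i * i := by
    have h2 := Nat.add_one_mul_choose_eq (2 ^ s - 1) (i - 1)
    have e1 : 2 ^ s - 1 + 1 = 2 ^ s := Nat.succ_pred_eq_of_pos (pow_pos two_pos s)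
    have e2 : i - 1 + 1 = i := Nat.succ_pred_eq_of_pos h0
    rw [e1, e2] at h2
    exact ⟨_, h2.symm⟩
  have key2 : 2 ^ (s - t) * 2 ^ t ∣ (Nat.choose (2 ^ s) i * u) * 2 ^ t := by
    have : 2 ^ (s - t) * 2 ^ t = 2 ^ s := by
      rw [← pow_add]; congr 1; omega
    rw [this]
    calc 2 ^ s ∣ Nat.choose (2 ^ s) i * i := key
    _ = Nat.choose (2 ^ s) i * u * 2 ^ t := by rw [mul_assoc, mul_comm u, hmul]
  have key3 : 2 ^ (s - t) ∣ Nat.choose (2 ^ s) i * u :=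
    (Nat.mul_dvd_mul_iff_right (pow_pos two_pos t)).1 key2
  have hcop : Nat.Coprime (2 ^ (s - t)) u :=
    Nat.Coprime.pow_left _ ((Nat.prime_two.coprime_iff_not_dvd).2 hodd)
  exact hcop.dvd_of_dvd_mul_right key3

private lemma ineq_aux {t n : ℕ} (hn : 5 ≤ n) : 2 * t + 5 ≤ n + 2 ^ t := by
  induction t with
  | zero => omega
  | succ s ih =>
    rcases Nat.eq_zero_or_pos s with rfl | hs
    · simp; omega
    · have h1 : (2:ℕ) ≤ 2 ^ s := by
        calc (2:ℕ) = 2 ^ 1 := rfl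
        _ ≤ 2 ^ s := Nat.pow_le_pow_right (by norm_num) hs
      have : (2:ℕ) ^ (s+1) = 2 * 2 ^ s := by rw [pow_succ, mul_comm]
      omega



private noncomputable def zpsi (m : ℕ) (x : N) (hx : m • x = 0) : ZMod m →+ N :=
  ZMod.lift m ⟨zmultiplesHom N x, by simpa using (natCast_zsmul x m).trans hx⟩

private lemma zpsi_natCast (m : ℕ) (x : N) (hx : m • x = 0) (k : ℕ) :
    zpsi m x hx (k : ZMod m) = k • x := by
  have : ((k : ℤ) : ZMod m) = (k : ZMod m) := by push_cast; rfl
  rw [← this, zpsi, ZMod.lift_coe]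
  simpa [zmultiplesHom] using natCast_zsmul x k

private lemma zpsi_inj (m : ℕ) [NeZero m] (x : N) (hx : m • x = 0)
    (ho : addOrderOf x = m) : Function.Injective (zpsi m x hx) := by
  rw [injective_iff_map_eq_zero]
  intro a ha
  have hval : ((a.val : ℕ) : ZMod m) = a := ZMod.natCast_val a |>.trans (ZMod.cast_id m a)
  rw [← hval, zpsi_natCast] at ha
  have hdvd : m ∣ a.val := by
    have := addOrderOf_dvd_of_nsmul_eq_zero ha
    rwa [ho] at this
  have hv : a.val = 0 := Nat.eq_zero_of_dvd_of_lt hdvd (ZMod.val_lt a)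
  rw [← hval, hv, Nat.cast_zero]

private lemma card_range_of_inj {M : Type*} [AddCommGroup M] (f : M →+ N)
    (hf : Function.Injective f) : Nat.card f.range = Nat.card M :=
  Nat.card_congr (Equiv.ofInjective f hf).symm

private lemma exists_notin [Finite N] (H : AddSubgroup N)
    (h : Nat.card H < Nat.card N) : ∃ z : N, z ∉ H := by
  by_contra hc
  push_neg at hc
  have : H = ⊤ := by ext z; simpa using hc z
  rw [this, AddSubgroup.card_top] at h
  omega

private lemma zmod2_cases : ∀ a : ZMod 2, a = 0 ∨ a = 1 := by decide

private lemma zmod4_cases : ∀ a : ZMod 4, a = 0 ∨ a = 1 ∨ a = 2 ∨ a = 3 := by decide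

/-- extending an injective hom by a two-torsion element outside its range -/
private lemma extend_two {P : Type} [AddCommGroup P] (Φ : P →+ N)
    (hΦ : Function.Injective Φ) {z : N} (hz2 : 2 • z = 0) (hz : z ∉ Φ.range) :
    Function.Injective ((zpsi 2 z hz2).coprod Φ) := by
  rw [injective_iff_map_eq_zero]
  rintro ⟨a, b⟩ hab
  have hab' : zpsi 2 z hz2 a + Φ b = 0 := hab
  rcases zmod2_cases a with rfl | rfl
  · have h0 : Φ b = 0 := by rwa [map_zero, zero_add] at hab'
    have : b = 0 := hΦ (by rw [h0, map_zero])
    simp [this]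
  · exfalso; apply hz
    have h1 : zpsi 2 z hz2 1 = z := by simpa using zpsi_natCast 2 z hz2 1
    have : z = -Φ b := by rw [← h1]; exact eq_neg_of_add_eq_zero_left hab'
    rw [this]; exact AddSubgroup.neg_mem _ ⟨_, rfl⟩

/-- adjusting an element modulo the range of `zpsi` to be 2-torsion -/
private lemma adjust_two [Finite N] {k : ℕ} (hk : 1 ≤ k) (x : N) (h0 : 2 ^ k • x = 0)
    (hinj : Function.Injective (zpsi (2^k) x h0))
    (y₀ : N) (hy₀exp : 2 ^ k • y₀ = 0) (c : ZMod (2^k)) (hc : zpsi (2^k) x h0 c = 2 • y₀) :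
    ∃ y : N, 2 • y = 0 ∧ ∃ d, y₀ - y = zpsi (2^k) x h0 d := by
  haveI : NeZero ((2:ℕ) ^ k) := ⟨by positivity⟩
  set ψ := zpsi (2^k) x h0 with hψ
  have hc' : ((c.val : ℕ) : ZMod (2^k)) = c := (ZMod.natCast_val c).trans (ZMod.cast_id _ c)
  have hceven : 2 ∣ c.val := by
    have h1 : ψ ((2 ^ (k-1) : ℕ) • c) = 0 := by
      rw [map_nsmul, hc, ← mul_nsmul', ← pow_succ]
      have : k - 1 + 1 = k := by omega
      rw [this]; exact hy₀exp
    have h2 : ((2 ^ (k-1) : ℕ) • c) = 0 := hinj (by rw [h1, map_zero])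
    have h3 : ((2 ^ (k-1) * c.val : ℕ) : ZMod (2 ^ k)) = 0 := by
      calc ((2 ^ (k-1) * c.val : ℕ) : ZMod (2 ^ k))
          = (2^(k-1) : ℕ) • ((c.val : ℕ) : ZMod (2^k)) := by push_cast [nsmul_eq_mul]; ring
        _ = (2^(k-1) : ℕ) • c := by rw [hc']
        _ = 0 := h2
    rw [ZMod.natCast_eq_zero_iff] at h3
    have : 2 ^ (k-1) * 2 ∣ 2 ^ (k-1) * c.val := by
      rw [← pow_succ]
      have e : k - 1 + 1 = k := by omega
      rw [e]; exact h3
    exact (Nat.mul_dvd_mul_iff_left (by positivity)).1 this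
  obtain ⟨w, hw⟩ := hceven
  refine ⟨y₀ - ψ ((w : ZMod (2 ^ k))), ?_, ⟨(w : ZMod (2^k)), by abel⟩⟩
  have hψw : (2:ℕ) • ψ ((w : ZMod (2^k))) = ψ c := by
    rw [← map_nsmul]
    congr 1
    have h2w : ((2 * w : ℕ) : ZMod (2^k)) = c := by rw [← hw]; exact hc'
    rw [← h2w]; push_cast [nsmul_eq_mul]; ring
  rw [smul_sub, hψw, hc, sub_self]

/-- elementary abelian of order 8 -/
private lemma construct_elem8 [Finite N] (hcard : Nat.card N = 8)
    (hexp : ∀ y : N, 2 • y = 0) : Nonempty (N ≃+ (ZMod 2 × ZMod 2 × ZMod 2)) := by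
  haveI hnt : Nontrivial N := Finite.one_lt_card_iff_nontrivial.1 (by omega)
  obtain ⟨x, hx⟩ := exists_ne (0 : N)
  have hox : addOrderOf x = 2 := addOrderOf_eq_prime (hexp x) hx
  set ψ := zpsi 2 x (hexp x) with hψ
  have hinjψ : Function.Injective ψ := zpsi_inj 2 x (hexp x) hox
  obtain ⟨y, hy⟩ := exists_notin ψ.range
    (by simp only [card_range_of_inj ψ hinjψ, Nat.card_zmod, hcard]; omega)
  have hinj2 := extend_two ψ hinjψ (hexp y) hy
  set Φ2 := (zpsi 2 y (hexp y)).coprod ψ with hΦ2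
  obtain ⟨z, hz⟩ := exists_notin Φ2.range
    (by simp only [card_range_of_inj Φ2 hinj2, Nat.card_prod, Nat.card_zmod, Nat.card_zmod, hcard]; omega)
  have hinj3 := extend_two Φ2 hinj2 (hexp z) hz
  set Φ3 := (zpsi 2 z (hexp z)).coprod Φ2 with hΦ3
  have hbij : Function.Bijective Φ3 := by
    rw [Nat.bijective_iff_injective_and_card]
    refine ⟨hinj3, ?_⟩
    simp only [Nat.card_prod, Nat.card_zmod, hcard]
    all_goals omega
  exact ⟨(AddEquiv.ofBijective Φ3 hbij).symm⟩

/-- elementary abelian of order 16 -/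
private lemma construct_elem16 [Finite N] (hcard : Nat.card N = 16)
    (hexp : ∀ y : N, 2 • y = 0) : Nonempty (N ≃+ (ZMod 2 × ZMod 2 × ZMod 2 × ZMod 2)) := by
  haveI hnt : Nontrivial N := Finite.one_lt_card_iff_nontrivial.1 (by omega)
  obtain ⟨x, hx⟩ := exists_ne (0 : N)
  have hox : addOrderOf x = 2 := addOrderOf_eq_prime (hexp x) hx
  set ψ := zpsi 2 x (hexp x) with hψ
  have hinjψ : Function.Injective ψ := zpsi_inj 2 x (hexp x) hox
  obtain ⟨y, hy⟩ := exists_notin ψ.range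
    (by simp only [card_range_of_inj ψ hinjψ, Nat.card_zmod, hcard]; omega)
  have hinj2 := extend_two ψ hinjψ (hexp y) hy
  set Φ2 := (zpsi 2 y (hexp y)).coprod ψ with hΦ2
  obtain ⟨z, hz⟩ := exists_notin Φ2.range
    (by simp only [card_range_of_inj Φ2 hinj2, Nat.card_prod, Nat.card_zmod, Nat.card_zmod, hcard]; omega)
  have hinj3 := extend_two Φ2 hinj2 (hexp z) hz
  set Φ3 := (zpsi 2 z (hexp z)).coprod Φ2 with hΦ3
  obtain ⟨u, hu⟩ := exists_notin Φ3.range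
    (by simp only [card_range_of_inj Φ3 hinj3, Nat.card_prod, Nat.card_prod,
         Nat.card_zmod, Nat.card_zmod, Nat.card_zmod, hcard]; omega)
  have hinj4 := extend_two Φ3 hinj3 (hexp u) hu
  set Φ4 := (zpsi 2 u (hexp u)).coprod Φ3 with hΦ4
  have hbij : Function.Bijective Φ4 := by
    rw [Nat.bijective_iff_injective_and_card]
    refine ⟨hinj4, ?_⟩
    simp only [Nat.card_prod, Nat.card_zmod, hcard]
    all_goals omega
  exact ⟨(AddEquiv.ofBijective Φ4 hbij).symm⟩

/-- order 16, exponent 4 -/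
private lemma construct_exp4_card16 [Finite N] (hcard : Nat.card N = 16)
    (hexp : ∀ y : N, 4 • y = 0) (x : N) (hox : addOrderOf x = 4) :
    Nonempty (N ≃+ (ZMod 4 × ZMod 4)) ∨ Nonempty (N ≃+ (ZMod 2 × ZMod 2 × ZMod 4)) := by
  haveI : NeZero (4:ℕ) := ⟨by norm_num⟩
  set ψ := zpsi 4 x (hexp x) with hψ
  have hinjψ : Function.Injective ψ := zpsi_inj 4 x (hexp x) hox
  set C := ψ.range with hC
  have hcC : Nat.card C = 4 := by rw [hC, card_range_of_inj ψ hinjψ, Nat.card_zmod]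
  have hψ1 : ψ 1 = x := by simpa using zpsi_natCast 4 x (hexp x) 1
  by_cases hcase : ∃ y : N, 2 • y ∉ C
  · -- ZMod 4 × ZMod 4
    obtain ⟨y, hy⟩ := hcase
    set χ := zpsi 4 y (hexp y) with hχ
    have hχval : ∀ k : ℕ, χ (k : ZMod 4) = k • y := fun k => zpsi_natCast 4 y (hexp y) k
    set Φ := χ.coprod ψ with hΦ
    have hΦinj : Function.Injective Φ := by
      rw [injective_iff_map_eq_zero]
      rintro ⟨a, b⟩ hab
      have hab' : χ a + ψ b = 0 := hab
      have hyC : y ∈ C → False := fun hyc => hy (AddSubgroup.nsmul_mem C hyc 2)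
      rcases zmod4_cases a with rfl | rfl | rfl | rfl
      · have h0 : ψ b = 0 := by rwa [map_zero, zero_add] at hab'
        have : b = 0 := hinjψ (by rw [h0, map_zero])
        simp [this]
      · exfalso
        apply hyC
        have h1 : χ 1 = y := by simpa using hχval 1
        have : y = -ψ b := by rw [← h1]; exact eq_neg_of_add_eq_zero_left hab'
        rw [this]; exact AddSubgroup.neg_mem _ ⟨_, rfl⟩
      · exfalso
        apply hy
        have h1 : χ 2 = 2 • y := by simpa using hχval 2
        have : 2 • y = -ψ b := by rw [← h1]; exact eq_neg_of_add_eq_zero_left hab'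
        rw [this]; exact AddSubgroup.neg_mem _ ⟨_, rfl⟩
      · exfalso
        apply hyC
        have h1 : χ 3 = (3:ℕ) • y := by simpa using hχval 3
        have h3 : (3:ℕ) • y = -ψ b := by rw [← h1]; exact eq_neg_of_add_eq_zero_left hab'
        have h4 : (3:ℕ) • y + y = 0 := by
          have := hexp y
          rw [show (4:ℕ) = 3 + 1 from rfl, add_nsmul, one_nsmul] at this
          simpa using this
        have : y = ψ b := by
          have hy3 : y = -((3:ℕ) • y) := (eq_neg_of_add_eq_zero_right h4)
          rw [hy3, h3, neg_neg]
        rw [this]; exact ⟨_, rfl⟩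
    have hbij : Function.Bijective Φ := by
      rw [Nat.bijective_iff_injective_and_card]
      refine ⟨hΦinj, ?_⟩
      simp only [Nat.card_prod, Nat.card_zmod, hcard]
      all_goals omega
    exact Or.inl ⟨(AddEquiv.ofBijective Φ hbij).symm⟩
  · -- ZMod 2 × ZMod 2 × ZMod 4
    push_neg at hcase
    obtain ⟨y₀, hy₀⟩ := exists_notin C (by rw [hcC, hcard]; omega)
    obtain ⟨c, hc⟩ := hcase y₀
    obtain ⟨y, hy2, d, hd⟩ :=
      adjust_two (k := 2) (by norm_num) x (hexp x) hinjψ y₀ (hexp y₀) c hc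
    have hd' : y₀ - y = ψ d := hd
    have hyC : y ∉ C := by
      intro h
      apply hy₀
      have hrw : y₀ = y + ψ d := by rw [← hd']; abel
      rw [hrw]; exact AddSubgroup.add_mem _ h ⟨_, rfl⟩
    set Φ2 := (zpsi 2 y hy2).coprod ψ with hΦ2
    have hinj2 : Function.Injective Φ2 := extend_two ψ hinjψ hy2 hyC
    obtain ⟨z₀, hz₀⟩ := exists_notin Φ2.range
      (by simp only [card_range_of_inj Φ2 hinj2, Nat.card_prod, Nat.card_zmod, Nat.card_zmod, hcard]; omega)
    obtain ⟨c2, hc2⟩ := hcase z₀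
    obtain ⟨z, hz2, d2, hd2⟩ :=
      adjust_two (k := 2) (by norm_num) x (hexp x) hinjψ z₀ (hexp z₀) c2 hc2
    have hd2' : z₀ - z = ψ d2 := hd2
    have hzH : z ∉ Φ2.range := by
      intro h
      apply hz₀
      have hrw : z₀ = z + ψ d2 := by rw [← hd2']; abel
      rw [hrw]
      refine AddSubgroup.add_mem _ h ⟨(0, d2), ?_⟩
      simp [hΦ2]
    have hinj3 := extend_two Φ2 hinj2 hz2 hzH
    set Φ3 := (zpsi 2 z hz2).coprod Φ2 with hΦ3
    have hbij : Function.Bijective Φ3 := by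
      rw [Nat.bijective_iff_injective_and_card]
      refine ⟨hinj3, ?_⟩
      simp only [Nat.card_prod, Nat.card_zmod, hcard]
    exact Or.inr ⟨(AddEquiv.ofBijective Φ3 hbij).symm⟩
/-- get an element of order exactly 2^k -/
private lemma order_of_crit {k : ℕ} {x : N} (hup : 2 ^ k • x = 0) (hdown : 2 ^ (k-1) • x ≠ 0)
    (hk : 1 ≤ k) : addOrderOf x = 2 ^ k := by
  have h1 : addOrderOf x ∣ 2 ^ k := addOrderOf_dvd_of_nsmul_eq_zero hup
  rcases (Nat.dvd_prime_pow Nat.prime_two).1 h1 with ⟨i, hik, hi⟩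
  rcases Nat.lt_or_ge i k with hlt | hge
  · exfalso
    apply hdown
    rw [← addOrderOf_dvd_iff_nsmul_eq_zero, hi]
    exact pow_dvd_pow 2 (by omega)
  · rw [hi]; congr 1; omega

/-- L1 : cyclic case -/
private lemma construct_cyclic [Finite N] {k : ℕ} (x : N) (hx : addOrderOf x = 2 ^ k)
    (hcard : Nat.card N = 2 ^ k) : Nonempty (N ≃+ ZMod (2 ^ k)) := by
  haveI : NeZero (2 ^ k) := ⟨by positivity⟩
  have h0 : 2 ^ k • x = 0 := by rw [← addOrderOf_dvd_iff_nsmul_eq_zero, hx]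
  set ψ := zpsi (2 ^ k) x h0
  have hinj := zpsi_inj _ x h0 hx
  have hbij : Function.Bijective ψ := by
    rw [Nat.bijective_iff_injective_and_card]
    exact ⟨hinj, by rw [Nat.card_zmod, hcard]⟩
  exact ⟨(AddEquiv.ofBijective ψ hbij).symm⟩

/-- L2 : index-two case -/
private lemma construct_index_two [Finite N] {k : ℕ} (hk : 1 ≤ k) (x : N)
    (hx : addOrderOf x = 2 ^ k) (hcard : Nat.card N = 2 ^ (k + 1))
    (hexp : ∀ y : N, 2 ^ k • y = 0) :
    Nonempty (N ≃+ (ZMod 2 × ZMod (2 ^ k))) := by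
  haveI : NeZero (2 ^ k) := ⟨by positivity⟩
  have h0 : 2 ^ k • x = 0 := hexp x
  set ψ := zpsi (2 ^ k) x h0 with hψdef
  have hinj := zpsi_inj _ x h0 hx
  set C := ψ.range with hC
  have hcC : Nat.card C = 2 ^ k := by
    rw [card_range_of_inj ψ hinj, Nat.card_zmod]
  obtain ⟨y₀, hy₀⟩ := exists_notin C (by rw [hcC, hcard]; exact Nat.pow_lt_pow_right one_lt_two (by omega))
  -- quotient has order 2
  have hquot : Nat.card (N ⧸ C) = 2 := by
    have := AddSubgroup.card_eq_card_quotient_mul_card_addSubgroup C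
    rw [hcard, hcC] at this
    have h2 : (2:ℕ) ^ (k+1) = 2 * 2 ^ k := by rw [pow_succ, mul_comm]
    have hpos : 0 < (2:ℕ) ^ k := by positivity
    nlinarith [Nat.card_pos (α := N ⧸ C)]
  have h2y : ∀ y : N, 2 • y ∈ C := by
    intro y
    have : (2 : ℕ) • (QuotientAddGroup.mk y : N ⧸ C) = 0 := by
      apply (addOrderOf_dvd_iff_nsmul_eq_zero).1
      rw [← hquot]; exact addOrderOf_dvd_natCard _
    rwa [← QuotientAddGroup.mk_nsmul, QuotientAddGroup.eq_zero_iff] at this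
  obtain ⟨c, hc⟩ := h2y y₀
  -- c is even
  have hceven : 2 ∣ c.val := by
    have h1 : ψ ((2 ^ (k-1) : ℕ) • c) = 0 := by
      rw [map_nsmul, hc, ← mul_nsmul', ← pow_succ]
      have : k - 1 + 1 = k := by omega
      rw [this]; exact hexp y₀
    have h2 : ((2 ^ (k-1) : ℕ) • c) = 0 := hinj (by rw [h1, map_zero])
    have hc' : ((c.val : ℕ) : ZMod (2^k)) = c := (ZMod.natCast_val c).trans (ZMod.cast_id _ c)
    have h3 : ((2 ^ (k-1) * c.val : ℕ) : ZMod (2 ^ k)) = 0 := by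
      calc ((2 ^ (k-1) * c.val : ℕ) : ZMod (2 ^ k))
          = (2^(k-1) : ℕ) • ((c.val : ℕ) : ZMod (2^k)) := by push_cast [nsmul_eq_mul]; ring
        _ = (2^(k-1) : ℕ) • c := by rw [hc']
        _ = 0 := h2
    rw [ZMod.natCast_eq_zero_iff] at h3
    have : 2 ^ (k-1) * 2 ∣ 2 ^ (k-1) * c.val := by
      rw [← pow_succ]
      have e : k - 1 + 1 = k := by omega
      rw [e]; exact h3
    exact (Nat.mul_dvd_mul_iff_left (by positivity)).1 this
  obtain ⟨w, hw⟩ := hceven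
  set y := y₀ - ψ ((w : ZMod (2 ^ k))) with hy
  have hc' : ((c.val : ℕ) : ZMod (2^k)) = c := (ZMod.natCast_val c).trans (ZMod.cast_id _ c)
  have hψw : (2:ℕ) • ψ ((w : ZMod (2^k))) = ψ c := by
    rw [← map_nsmul]
    congr 1
    have h2w : ((2 * w : ℕ) : ZMod (2^k)) = c := by rw [← hw]; exact hc'
    rw [← h2w]; push_cast [nsmul_eq_mul]; ring
  have hy2 : 2 • y = 0 := by
    rw [hy, smul_sub, hψw, hc, sub_self]
  have hyC : y ∉ C := by
    intro hyc
    apply hy₀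
    have : y₀ = y + ψ ((w : ZMod (2^k))) := by rw [hy]; abel
    rw [this]
    exact AddSubgroup.add_mem _ hyc ⟨_, rfl⟩
  -- assemble
  set χ := zpsi 2 y hy2 with hχ
  set Φ := χ.coprod ψ with hΦ
  have hΦinj : Function.Injective Φ := by
    rw [injective_iff_map_eq_zero]
    rintro ⟨a, b⟩ hab
    have hab' : χ a + ψ b = 0 := hab
    rcases zmod2_cases a with rfl | rfl
    · have : ψ b = 0 := by rwa [map_zero, zero_add] at hab'
      have : b = 0 := hinj (by rw [this, map_zero])
      simp [this]
    · exfalso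
      apply hyC
      have h1 : χ 1 = y := by
        have := zpsi_natCast 2 y hy2 1
        simpa using this
      have : y = -ψ b := by rw [← h1]; exact eq_neg_of_add_eq_zero_left hab'
      rw [this]
      exact AddSubgroup.neg_mem _ ⟨_, rfl⟩
  have hbij : Function.Bijective Φ := by
    rw [Nat.bijective_iff_injective_and_card]
    refine ⟨hΦinj, ?_⟩
    rw [Nat.card_prod, Nat.card_zmod, Nat.card_zmod, hcard, pow_succ, mul_comm]
  exact ⟨(AddEquiv.ofBijective Φ hbij).symm⟩




/-- The nilpotency chain lemma: a nilpotent endomorphism of a subgroup of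
2-power order `≤ 2^m` vanishes after `m` steps.  -/
private lemma nilp_chain [Finite N] (f : AddMonoid.End N) (K : ℕ) :
    ∀ (m : ℕ) (X : AddSubgroup N), (∀ x ∈ X, f x ∈ X) → (∀ x ∈ X, (f ^ K) x = 0) →
      Nat.card X ≤ 2 ^ m → ∀ x ∈ X, (f ^ m) x = 0 := by
  intro m
  induction m with
  | zero =>
    intro X _ _ hcard x hx
    have hbot : X = ⊥ := AddSubgroup.eq_bot_of_card_eq X (le_antisymm (by simpa using hcard) Nat.card_pos)
    rw [hbot] at hx
    rw [AddSubgroup.mem_bot] at hx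
    rw [hx, map_zero]
  | succ m ih =>
    intro X hfX hK hcard x hx
    obtain ⟨Y, hY⟩ : ∃ Y, Y = AddSubgroup.map (f : N →+ N) X := ⟨_, rfl⟩
    have hYX : Y ≤ X := by
      rw [hY]
      rintro _ ⟨z, hz, rfl⟩
      exact hfX z hz
    by_cases hE : Y = X
    · -- f surjective on X, hence X trivial
      have hiter : ∀ k, AddSubgroup.map ((f ^ k : AddMonoid.End N) : N →+ N) X = X := by
        intro k
        induction k with
        | zero => rw [pow_zero]; exact AddSubgroup.map_id X
        | succ k ihk =>
          have : (f ^ (k+1) : AddMonoid.End N) = (f ^ k : AddMonoid.End N) * f := pow_succ f k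
          rw [this]
          have hcomp : ((f ^ k * f : AddMonoid.End N) : N →+ N)
              = ((f ^ k : AddMonoid.End N) : N →+ N).comp (f : N →+ N) := rfl
          rw [hcomp]
          have hfXX : AddSubgroup.map (f : N →+ N) X = X := hY ▸ hE
          calc AddSubgroup.map (((f ^ k : AddMonoid.End N) : N →+ N).comp (f : N →+ N)) X
              = AddSubgroup.map ((f ^ k : AddMonoid.End N) : N →+ N)
                  (AddSubgroup.map (f : N →+ N) X) := (AddSubgroup.map_map _ _ _).symm
            _ = X := (congrArg (AddSubgroup.map ((f ^ k : AddMonoid.End N) : N →+ N)) hfXX).trans ihk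
      have hXmap : X = AddSubgroup.map ((f ^ K : AddMonoid.End N) : N →+ N) X := (hiter K).symm
      have hx0 : x = 0 := by
        rw [hXmap] at hx
        obtain ⟨z, hz, rfl⟩ := hx
        exact hK z hz
      rw [hx0, map_zero]
    · have hdvd : Nat.card Y ∣ Nat.card X := AddSubgroup.card_dvd_of_le hYX
      have hne : Nat.card Y ≠ Nat.card X := by
        intro hcardeq
        apply hE
        have hsub : (Y : Set N) ⊆ (X : Set N) := hYX
        have hYfin : (X : Set N).Finite := Set.toFinite _
        have hcc : Nat.card Y = (Y : Set N).ncard := Nat.card_coe_set_eq _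
        have hcc2 : Nat.card X = (X : Set N).ncard := Nat.card_coe_set_eq _
        have : (Y : Set N) = (X : Set N) :=
          Set.eq_of_subset_of_ncard_le hsub (by omega) hYfin
        exact SetLike.coe_set_eq.1 this
      have h2Y : 2 * Nat.card Y ≤ Nat.card X := by
        obtain ⟨c, hc⟩ := hdvd
        have hYpos : 0 < Nat.card (↥Y) := Nat.card_pos
        have hXpos : 0 < Nat.card (↥X) := Nat.card_pos
        rcases Nat.lt_or_ge c 2 with hc2 | hc2
        · interval_cases c <;> omega
        · calc 2 * Nat.card ↥Y ≤ c * Nat.card ↥Y := Nat.mul_le_mul_right _ hc2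
          _ = Nat.card ↥X := by rw [hc, mul_comm]
      have hYcard : Nat.card Y ≤ 2 ^ m := by
        have hp : (2:ℕ)^(m+1) = 2*2^m := by rw [pow_succ, mul_comm]
        omega
      have hfy : ∀ y ∈ Y, f y ∈ Y := by
        rw [hY]
        rintro _ ⟨z, hz, rfl⟩
        exact ⟨f z, hfX z hz, rfl⟩
      have hKY : ∀ y ∈ Y, (f ^ K) y = 0 := fun y hy => hK y (hYX hy)
      have hm := ih Y hfy hKY hYcard
      have hfx : f x ∈ Y := by rw [hY]; exact ⟨x, hx, rfl⟩
      calc (f ^ (m+1)) x = (f ^ m) (f x) := by rw [pow_succ]; rfl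
      _ = 0 := hm _ hfx


/-- the multiplication-by-`2^i` homomorphism -/
private def muHom (N : Type) [AddCommGroup N] (i : ℕ) : N →+ N :=
  AddMonoidHom.mk' (fun x => 2 ^ i • x) (fun a b => smul_add _ a b)

private lemma muHom_apply (i : ℕ) (x : N) : muHom N i x = 2 ^ i • x := rfl

/-- subgroup `2^i N` -/
private def Xgp (N : Type) [AddCommGroup N] (i : ℕ) : AddSubgroup N := (muHom N i).range

/-- `m i` = size of the 2-torsion of `2^i N` -/
private noncomputable def mtor (N : Type) [AddCommGroup N] (i : ℕ) : ℕ :=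
  Nat.card ↥(Xgp N i ⊓ (muHom N 1).ker)

private lemma two_smul_aux (i : ℕ) (x : N) : muHom N 1 (muHom N i x) = muHom N (i+1) x := by
  rw [muHom_apply, muHom_apply, muHom_apply, ← mul_nsmul, pow_one, ← pow_succ]

private lemma Xgp_mono (i : ℕ) : Xgp N (i + 1) ≤ Xgp N i := by
  rintro _ ⟨x, rfl⟩
  refine ⟨2 • x, ?_⟩
  rw [muHom_apply, muHom_apply, ← mul_nsmul, ← pow_succ']

private lemma Xgp_card_split [Finite N] (i : ℕ) :
    Nat.card (Xgp N i) = Nat.card (Xgp N (i + 1)) * mtor N i := by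
  set e := (muHom N 1).comp (Xgp N i).subtype with he
  have h1 : Nat.card ↥(Xgp N i) = Nat.card (↥(Xgp N i) ⧸ e.ker) * Nat.card e.ker :=
    AddSubgroup.card_eq_card_quotient_mul_card_addSubgroup e.ker
  have h2 : Nat.card (↥(Xgp N i) ⧸ e.ker) = Nat.card e.range :=
    Nat.card_congr (QuotientAddGroup.quotientKerEquivRange e).toEquiv
  have hrange : e.range = Xgp N (i+1) := by
    ext z
    constructor
    · rintro ⟨⟨y, x, rfl⟩, rfl⟩
      exact ⟨x, (two_smul_aux i x).symm⟩
    · rintro ⟨x, rfl⟩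
      exact ⟨⟨muHom N i x, ⟨x, rfl⟩⟩, two_smul_aux i x⟩
  have hker : Nat.card e.ker = mtor N i := by
    apply Nat.card_congr
    refine ⟨fun p => ⟨p.1.1, p.1.2, p.2⟩, fun q => ⟨⟨q.1, q.2.1⟩, q.2.2⟩, ?_, ?_⟩
    · intro p; rfl
    · intro q; rfl
  rw [h1, h2, hrange, hker]

private lemma mtor_antitone [Finite N] {i j : ℕ} (hij : i ≤ j) : mtor N j ≤ mtor N i := by
  have key : ∀ d i, mtor N (i + d) ≤ mtor N i := by
    intro d
    induction d with
    | zero => intro i; exact le_refl _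
    | succ d ihd =>
      intro i
      calc mtor N (i + (d+1)) = mtor N ((i+1) + d) := by ring_nf
      _ ≤ mtor N (i+1) := ihd (i+1)
      _ ≤ mtor N i := AddSubgroup.card_le_of_le (inf_le_inf_right _ (Xgp_mono i))
  have := key (j - i) i
  rwa [Nat.add_sub_cancel' hij] at this

private lemma Xgp_zero : Xgp N 0 = ⊤ := by
  ext z
  simp only [AddSubgroup.mem_top, iff_true]
  exact ⟨z, by rw [muHom_apply, pow_zero, one_smul]⟩

private lemma Xgp_card_le [Finite N] {n : ℕ} (hexp : ∀ y : N, 2 ^ (n-2) • y = 0) :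
    ∀ s i, i + s = n - 2 → Nat.card (Xgp N i) ≤ mtor N i ^ s := by
  intro s
  induction s with
  | zero =>
    intro i hi
    have hbot : Xgp N i = ⊥ := by
      ext z
      simp only [AddSubgroup.mem_bot]
      constructor
      · rintro ⟨x, rfl⟩
        rw [muHom_apply]
        have : i = n - 2 := by omega
        rw [this]; exact hexp x
      · rintro rfl; exact ⟨0, by rw [muHom_apply, smul_zero]⟩
    rw [hbot, AddSubgroup.card_bot, pow_zero]
  | succ s ihs =>
    intro i hi
    calc Nat.card (Xgp N i) = Nat.card (Xgp N (i+1)) * mtor N i := Xgp_card_split i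
    _ ≤ mtor N (i+1) ^ s * mtor N i := by
        exact Nat.mul_le_mul_right _ (ihs (i+1) (by omega))
    _ ≤ mtor N i ^ s * mtor N i := by
        exact Nat.mul_le_mul_right _ (Nat.pow_le_pow_left (mtor_antitone (by omega)) s)
    _ = mtor N i ^ (s+1) := by rw [pow_succ]

private lemma Xgp_card_low [Finite N] :
    ∀ (k r : ℕ), k ≤ r → mtor N r ^ k * Nat.card (Xgp N r) ≤ Nat.card (Xgp N (r - k)) := by
  intro k
  induction k with
  | zero => intro r _; simp
  | succ k ihk =>
    intro r hkr
    have h1 : r - (k+1) + 1 = r - k := by omega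
    have hsplit : Nat.card (Xgp N (r - (k+1))) = Nat.card (Xgp N (r - k)) * mtor N (r - (k+1)) := by
      have := Xgp_card_split (N := N) (r - (k+1))
      rwa [h1] at this
    calc mtor N r ^ (k+1) * Nat.card (Xgp N r)
        = (mtor N r ^ k * Nat.card (Xgp N r)) * mtor N r := by ring
    _ ≤ Nat.card (Xgp N (r - k)) * mtor N r := Nat.mul_le_mul_right _ (ihk r (by omega))
    _ ≤ Nat.card (Xgp N (r - k)) * mtor N (r - (k+1)) :=
        Nat.mul_le_mul_left _ (mtor_antitone (by omega))
    _ = Nat.card (Xgp N (r - (k+1))) := hsplit.symm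

/-- The key counting bound: `|2^r N| ≤ 2^(2^t - 1)` when `r + t = n-2`, `n ≥ 5`. -/
private lemma Xgp_card_bound [Finite N] {n : ℕ} (hn : 5 ≤ n) (hN : Nat.card N = 2 ^ n)
    (hexp : ∀ y : N, 2 ^ (n-2) • y = 0) {t r : ℕ} (hrt : r + t = n - 2) :
    Nat.card (Xgp N r) ≤ 2 ^ (2 ^ t - 1) := by
  rcases Nat.lt_or_ge (mtor N r) 3 with hm | hm
  · calc Nat.card (Xgp N r) ≤ mtor N r ^ t := Xgp_card_le hexp t r hrt
    _ ≤ 2 ^ t := Nat.pow_le_pow_left (by omega) t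
    _ ≤ 2 ^ (2 ^ t - 1) := by
        apply Nat.pow_le_pow_right (by norm_num)
        have := Nat.lt_two_pow_self (n := t)
        omega
  · -- mtor N r is a power of 2 that is ≥ 3, hence ≥ 4
    have hdvd : mtor N r ∣ 2 ^ n := by
      rw [← hN]
      exact AddSubgroup.card_addSubgroup_dvd_card _
    obtain ⟨km, hkm, hkm2⟩ := (Nat.dvd_prime_pow Nat.prime_two).1 hdvd
    have h4 : 4 ≤ mtor N r := by
      rcases Nat.lt_or_ge km 2 with h | h
      · interval_cases km <;> omega
      · calc (4:ℕ) = 2 ^ 2 := rfl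
        _ ≤ 2 ^ km := Nat.pow_le_pow_right (by norm_num) h
        _ = mtor N r := hkm2.symm
    have hX0 : Nat.card (Xgp N 0) = 2 ^ n := by rw [Xgp_zero, AddSubgroup.card_top, hN]
    have hlow := Xgp_card_low (N := N) r r (le_refl r)
    rw [Nat.sub_self, hX0] at hlow
    have hXdvd : Nat.card (Xgp N r) ∣ 2 ^ n := by
      rw [← hN]; exact AddSubgroup.card_addSubgroup_dvd_card _
    obtain ⟨x, hxn, hx2⟩ := (Nat.dvd_prime_pow Nat.prime_two).1 hXdvd
    have h4r : 2 ^ (2 * r) * 2 ^ x ≤ 2 ^ n := by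
      calc 2 ^ (2*r) * 2 ^ x = 4 ^ r * 2 ^ x := by
            rw [show (4:ℕ) = 2^2 from rfl, ← pow_mul]
      _ ≤ mtor N r ^ r * 2 ^ x := Nat.mul_le_mul_right _ (Nat.pow_le_pow_left h4 r)
      _ = mtor N r ^ r * Nat.card (Xgp N r) := by rw [hx2]
      _ ≤ 2 ^ n := hlow
    have hpows : (2:ℕ) ^ (2*r + x) ≤ 2 ^ n := by rw [pow_add]; exact h4r
    have hexps : 2 * r + x ≤ n := (Nat.pow_le_pow_iff_right (by norm_num)).1 hpows
    have hine := ineq_aux (t := t) hn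
    have hxle : x ≤ 2 ^ t - 1 := by
      have h2t := Nat.one_le_two_pow (n := t)
      omega
    rw [hx2]
    exact Nat.pow_le_pow_right (by norm_num) hxle


/-- The key vanishing: with everything 2^{n-2}-torsion and n ≥ 5,
the orbit sequence returns to 0 after 2^(n-2) steps. -/
private lemma key_vanish [Finite N] {n : ℕ} (hn : 5 ≤ n) (hN : Nat.card N = 2 ^ n)
    (A : Multiplicative (AddAut N)) (v : N) (hA : A ^ (2 ^ (n-1)) = 1)
    (hexp : ∀ y : N, 2 ^ (n-2) • y = 0) (w : ℕ → N) (hw0 : w 0 = 0)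
    (hws : ∀ k, w (k+1) = v + (Multiplicative.toAdd A) (w k)) : w (2 ^ (n-2)) = 0 := by
  set a : AddMonoid.End N := AddEquiv.toAddMonoidHom (Multiplicative.toAdd A) with hadef
  set f : AddMonoid.End N := a - 1 with hf
  have hfa : 1 + f = a := by rw [hf]; abel
  have hapow : ∀ (k : ℕ) (x : N), (a ^ k) x = (Multiplicative.toAdd (A ^ k)) x := by
    intro k
    induction k with
    | zero => intro x; rfl
    | succ k ih =>
      intro x
      rw [pow_succ, pow_succ]
      calc (a ^ k * a) x = (a ^ k) (a x) := rfl
      _ = (Multiplicative.toAdd (A ^ k)) ((Multiplicative.toAdd A) x) := ih _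
      _ = (Multiplicative.toAdd (A ^ k * A)) x := rfl
  have ha1 : a ^ (2 ^ (n-1)) = 1 := by
    refine AddMonoidHom.ext fun x => ?_
    exact (hapow _ x).trans (by rw [hA]; rfl)
  set M := 2 ^ (n-1) with hM
  have hMpos : 0 < M := by positivity
  have hbin : (1 : AddMonoid.End N)
      = ∑ m ∈ Finset.range (M+1), f ^ m * (Nat.choose M m : AddMonoid.End N) := by
    have hc : Commute f (1 : AddMonoid.End N) := Commute.one_right f
    have hb := hc.add_pow M
    simp only [one_pow, mul_one] at hb
    rw [show f + 1 = a from by rw [← hfa]; abel, ha1] at hb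
    exact hb
  have heven : ∀ m ∈ Finset.Ico 1 M, 2 ∣ Nat.choose M m := by
    intro m hm
    rw [Finset.mem_Ico] at hm
    obtain ⟨hm1, hm2⟩ := hm
    have hd := two_pow_dvd_choose (s := n-1) (i := m) (by omega) (by rw [← hM]; omega)
    have hv : m.factorization 2 < n - 1 := by
      have h1 : 2 ^ (m.factorization 2) ∣ m := Nat.ordProj_dvd m 2
      have h2 : 2 ^ (m.factorization 2) ≤ m := Nat.le_of_dvd (by omega) h1
      by_contra hcon
      push_neg at hcon
      have h3 : (2:ℕ)^(n-1) ≤ 2 ^ (m.factorization 2) := Nat.pow_le_pow_right (by norm_num) hcon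
      omega
    calc (2:ℕ) = 2^1 := rfl
    _ ∣ 2 ^ (n - 1 - m.factorization 2) := pow_dvd_pow 2 (by omega)
    _ ∣ Nat.choose (2 ^ (n-1)) m := hd
  have hsplit : (1 : AddMonoid.End N) = 1 + (∑ m ∈ Finset.Ico 1 M, f ^ m * (Nat.choose M m : AddMonoid.End N)) + f ^ M := by
    conv_lhs => rw [hbin]
    rw [Finset.sum_range_succ, Nat.choose_self, Nat.cast_one, mul_one,
      Finset.range_eq_Ico, Finset.sum_eq_sum_Ico_succ_bot hMpos,
      Nat.choose_zero_right, Nat.cast_one, mul_one, pow_zero]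
  have hfM : f ^ M = - ∑ m ∈ Finset.Ico 1 M, f ^ m * (Nat.choose M m : AddMonoid.End N) := by
    have h0 : (∑ m ∈ Finset.Ico 1 M, f ^ m * (Nat.choose M m : AddMonoid.End N)) + f ^ M = 0 := by
      have := hsplit.symm
      rwa [add_assoc, add_eq_left] at this
    exact eq_neg_of_add_eq_zero_right h0
  set h : AddMonoid.End N := - ∑ m ∈ Finset.Ico 1 M, (Nat.choose M m / 2) • f ^ m with hh
  have h2h : f ^ M = 2 • h := by
    rw [hfM, hh, neg_nsmul, ← Finset.sum_nsmul]
    congr 1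
    apply Finset.sum_congr rfl
    intro m hm
    have he := heven m hm
    calc f ^ m * (Nat.choose M m : AddMonoid.End N)
        = (Nat.choose M m) • f ^ m := by
          rw [nsmul_eq_mul, (Nat.cast_commute (Nat.choose M m) (f ^ m)).eq]
    _ = ((Nat.choose M m / 2) * 2) • f ^ m := by rw [Nat.div_mul_cancel he]
    _ = 2 • ((Nat.choose M m / 2) • f ^ m) := by rw [mul_nsmul]
  have hK : ∀ x : N, (f ^ (M * (n-2))) x = 0 := by
    intro x
    rw [pow_mul, h2h, smul_pow]
    have : ((2 ^ (n-2) : ℕ) • (h ^ (n-2))) x = (2 ^ (n-2) : ℕ) • ((h ^ (n-2)) x) := rfl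
    rw [this]
    exact hexp _
  -- the coefficient sequence
  set g : ℕ → AddMonoid.End N :=
    fun k => ∑ j ∈ Finset.range k, (Nat.choose k (j+1)) • f ^ j with hg
  have hgrec : ∀ k, g (k+1) = 1 + a * g k := by
    intro k
    rw [hg]
    simp only
    rw [← hfa, add_mul, one_mul, Finset.mul_sum]
    have hred : ∀ j, f * (Nat.choose k (j+1)) • f ^ j = (Nat.choose k (j+1)) • f ^ (j+1) := by
      intro j
      rw [mul_smul_comm, ← pow_succ']
    have hsum2 : (∑ j ∈ Finset.range k, f * (Nat.choose k (j+1)) • f ^ j)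
        = ∑ j ∈ Finset.range k, (Nat.choose k (j+1)) • f ^ (j+1) := by
      exact Finset.sum_congr rfl (fun j _ => hred j)
    rw [hsum2]
    -- LHS = Σ_{j<k+1} C(k+1,j+1)•f^j
    have hLHS : (∑ j ∈ Finset.range (k+1), (Nat.choose (k+1) (j+1)) • f ^ j)
        = (∑ j ∈ Finset.range (k+1), (Nat.choose k (j+1)) • f ^ j)
          + ∑ j ∈ Finset.range (k+1), (Nat.choose k j) • f ^ j := by
      rw [← Finset.sum_add_distrib]
      apply Finset.sum_congr rfl
      intro j _
      rw [Nat.choose_succ_succ, add_smul]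
      abel
    have e1 : (∑ j ∈ Finset.range (k+1), (Nat.choose k (j+1)) • f ^ j)
        = ∑ j ∈ Finset.range k, (Nat.choose k (j+1)) • f ^ j := by
      rw [Finset.sum_range_succ, Nat.choose_succ_self, zero_smul, add_zero]
    have e2 : (∑ j ∈ Finset.range (k+1), (Nat.choose k j) • f ^ j)
        = 1 + ∑ j ∈ Finset.range k, (Nat.choose k (j+1)) • f ^ (j+1) := by
      rw [Finset.sum_range_succ', Nat.choose_zero_right, pow_zero, one_smul]
      abel
    rw [hLHS, e1, e2]
    abel
  have hwg : ∀ k, w k = (g k) v := by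
    intro k
    induction k with
    | zero =>
      rw [hw0, hg]
      simp
    | succ k ih =>
      rw [hws k, ih, hgrec k]
      have : ((1 + a * g k) : AddMonoid.End N) v = v + a ((g k) v) := rfl
      rw [this]
      rfl
  -- vanishing of each term
  have hterm : ∀ j ∈ Finset.range (2^(n-2)), (Nat.choose (2^(n-2)) (j+1)) • ((f ^ j) v) = 0 := by
    intro j hj
    rw [Finset.mem_range] at hj
    set t := (j+1).factorization 2 with ht
    have h2t : 2 ^ t ∣ j + 1 := Nat.ordProj_dvd _ 2
    have h2tle : 2 ^ t ≤ j + 1 := Nat.le_of_dvd (by omega) h2t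
    have hj1 : j + 1 ≤ 2 ^ (n-2) := hj
    have htle : t ≤ n - 2 := by
      have := le_trans h2tle hj1
      exact (Nat.pow_le_pow_iff_right one_lt_two).1 this
    obtain ⟨c, hc⟩ := two_pow_dvd_choose (s := n-2) (i := j+1) (by omega) hj1
    set r := n - 2 - t with hr
    have hrt : r + t = n - 2 := by omega
    rw [hc, mul_nsmul]
    have hcomm : (2:ℕ)^r • ((f^j) v) = (f^j) ((2:ℕ)^r • v) := (map_nsmul (f^j) (2^r) v).symm
    rw [hcomm]
    have hmem : (2:ℕ)^r • v ∈ Xgp N r := ⟨v, rfl⟩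
    have hfX : ∀ x ∈ Xgp N r, f x ∈ Xgp N r := by
      rintro _ ⟨x, rfl⟩
      refine ⟨f x, ?_⟩
      rw [muHom_apply, muHom_apply]
      exact (map_nsmul f (2^r) x).symm
    have hKX : ∀ x ∈ Xgp N r, (f ^ (M * (n-2))) x = 0 := fun x _ => hK x
    have hcard := Xgp_card_bound hn hN hexp hrt
    have hnil := nilp_chain f (M * (n-2)) (2^t - 1) (Xgp N r) hfX hKX hcard
    have hpres : ∀ (k : ℕ) (x : N), x ∈ Xgp N r → (f ^ k) x ∈ Xgp N r := by
      intro k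
      induction k with
      | zero => intro x hx; exact hx
      | succ k ih =>
        intro x hx
        rw [pow_succ]
        exact ih _ (hfX x hx)
    have hjsplit : (2^t - 1) + (j - (2^t - 1)) = j := by omega
    have hfj : (f ^ j) ((2:ℕ)^r • v) = (f ^ (2^t - 1)) ((f ^ (j - (2^t-1))) ((2:ℕ)^r • v)) := by
      conv_lhs => rw [← hjsplit, pow_add]
      rfl
    rw [hfj, hnil _ (hpres _ _ hmem), smul_zero]
  rw [hwg]
  have happ : (g (2 ^ (n-2))) v
      = ∑ j ∈ Finset.range (2^(n-2)), ((Nat.choose (2^(n-2)) (j+1)) • f ^ j) v := by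
    rw [hg]
    exact AddMonoidHom.finset_sum_apply _ _ v
  rw [happ]
  apply Finset.sum_eq_zero
  intro j hj
  have : ((Nat.choose (2^(n-2)) (j+1)) • f ^ j) v = (Nat.choose (2^(n-2)) (j+1)) • ((f ^ j) v) := rfl
  rw [this]
  exact hterm j hj



end Aux

set_option maxHeartbeats 1000000 in
theorem additive_group_of_quaternion_or_dihedral_brace (n : ℕ) (hn : 2 ≤ n)
    (N : Type) [AddCommGroup N] (hN : Nat.card N = 2 ^ n)
    (G : Subgroup (Hol N)) (hreg : IsRegularSubgroup G)
    (hiso : Nonempty (G ≃* QuaternionGroup (2 ^ (n - 2))) ∨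
            Nonempty (G ≃* DihedralGroup (2 ^ (n - 1)))) :
    Nonempty (N ≃+ ZMod (2 ^ n)) ∨
    Nonempty (N ≃+ (ZMod 2 × ZMod (2 ^ (n - 1)))) ∨
    (3 ≤ n ∧ Nonempty (N ≃+ (ZMod 4 × ZMod (2 ^ (n - 2))))) ∨
    (3 ≤ n ∧ Nonempty (N ≃+ (ZMod 2 × ZMod 2 × ZMod (2 ^ (n - 2))))) ∨
    (4 ≤ n ∧ Nonempty (N ≃+ (ZMod 2 × ZMod 2 × ZMod 2 × ZMod (2 ^ (n - 3))))) := by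
  haveI : Finite N := Nat.finite_of_card_ne_zero (by rw [hN]; positivity)
  -- extract an element of order 2^(n-1) in G
  obtain ⟨ρ, hρord⟩ : ∃ ρ : ↥G, orderOf ρ = 2 ^ (n - 1) := by
    rcases hiso with he | he
    · obtain ⟨e⟩ := he
      refine ⟨e.symm (QuaternionGroup.a 1), ?_⟩
      rw [MulEquiv.orderOf_eq, QuaternionGroup.orderOf_a_one, ← pow_succ']
      congr 1
      omega
    · obtain ⟨e⟩ := he
      refine ⟨e.symm (DihedralGroup.r 1), ?_⟩
      rw [MulEquiv.orderOf_eq, DihedralGroup.orderOf_r_one]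
  set ρH : Hol N := (ρ : Hol N) with hρH
  have hρHord : orderOf ρH = 2 ^ (n-1) := by
    rw [hρH, ← hρord]
    exact orderOf_injective G.subtype G.subtype_injective ρ
  set A : Multiplicative (AddAut N) := ρH.right with hAdef
  set v : N := Multiplicative.toAdd ρH.left with hvdef
  have hApow : A ^ (2 ^ (n-1)) = 1 := by
    have h1 : ρH ^ (2^(n-1)) = 1 := by rw [← hρHord]; exact pow_orderOf_eq_one ρH
    have h2 := congrArg SemidirectProduct.rightHom h1
    rwa [map_pow, map_one] at h2
  set w : ℕ → N := fun k => Multiplicative.toAdd ((ρH ^ k).left) with hwdef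
  have hw0 : w 0 = 0 := by
    rw [hwdef]
    simp only [pow_zero, SemidirectProduct.one_left, toAdd_one]
  have hws : ∀ k, w (k+1) = v + (Multiplicative.toAdd A) (w k) := by
    intro k
    rw [hwdef]
    simp only
    rw [pow_succ', SemidirectProduct.mul_left, toAdd_mul]
    rfl
  have hsmul0 : ∀ k, holSmul (ρH ^ k) 0 = w k := by
    intro k
    rw [holSmul]
    rw [map_zero, add_zero]
  have hwne : w (2 ^ (n-2)) ≠ 0 := by
    intro h0
    have hne1 : ρ ^ (2 ^ (n-2)) ≠ 1 := by
      apply pow_ne_one_of_lt_orderOf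
      · exact (pow_pos two_pos _).ne'
      · rw [hρord]
        exact Nat.pow_lt_pow_right one_lt_two (by omega)
    obtain ⟨g₀, hg₀, huniq⟩ := hreg 0 0
    have h1 : holSmul ((1 : ↥G) : Hol N) 0 = 0 := by
      rw [holSmul]
      simp only [OneMemClass.coe_one, SemidirectProduct.one_left, toAdd_one,
        SemidirectProduct.one_right]
      simp
    have hcoe : ((ρ ^ (2^(n-2)) : ↥G) : Hol N) = ρH ^ (2^(n-2)) := by
      rw [hρH]
      exact SubmonoidClass.coe_pow ρ _
    have h2 : holSmul ((ρ ^ (2^(n-2)) : ↥G) : Hol N) 0 = 0 := by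
      rw [hcoe, hsmul0]; exact h0
    have heq : (ρ ^ (2^(n-2)) : ↥G) = 1 := (huniq _ h2).trans (huniq _ h1).symm
    exact hne1 heq
  -- main case analysis
  by_cases hP1 : ∀ y : N, 2 ^ (n-1) • y = 0
  · by_cases hP2 : ∀ y : N, 2 ^ (n-2) • y = 0
    · -- all elements killed by 2^(n-2) : impossible for n ≥ 5, small cases otherwise
      rcases Nat.lt_or_ge n 5 with hn5 | hn5
      swap
      · exact absurd (key_vanish hn5 hN A v hApow hP2 w hw0 hws) hwne
      · interval_cases n
        · -- n = 2 : every element is 0, contradiction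
          exfalso
          apply hwne
          have := hP2 (w (2 ^ (2-2)))
          simpa using this
        · -- n = 3 : exponent 2, order 8
          refine Or.inr (Or.inr (Or.inr (Or.inl ⟨by norm_num, ?_⟩)))
          have hexp2 : ∀ y : N, 2 • y = 0 := by
            intro y
            have := hP2 y
            norm_num at this
            exact this
          have h8 := construct_elem8 (by rw [hN]; norm_num) hexp2
          have he : (2:ℕ) ^ (3-2) = 2 := by norm_num
          rw [he]
          exact h8
        · -- n = 4 : exponent 4, order 16
          have hexp4 : ∀ y : N, 4 • y = 0 := by
            intro y
            have := hP2 y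
            norm_num at this
            exact this
          by_cases hexp2 : ∀ y : N, 2 • y = 0
          · refine Or.inr (Or.inr (Or.inr (Or.inr ⟨by norm_num, ?_⟩)))
            have h16 := construct_elem16 (by rw [hN]; norm_num) hexp2
            have he : (2:ℕ) ^ (4-3) = 2 := by norm_num
            rw [he]
            exact h16
          · push_neg at hexp2
            obtain ⟨x, hx⟩ := hexp2
            have hox : addOrderOf x = 4 := by
              have := order_of_crit (k := 2) (x := x) (by
                  have := hP2 x
                  norm_num at this ⊢
                  exact this) (by
                  norm_num
                  exact hx) (by norm_num)
              norm_num at this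
              exact this
            have hdico := construct_exp4_card16 (by rw [hN]; norm_num) hexp4 x hox
            have he : (2:ℕ) ^ (4-2) = 4 := by norm_num
            rcases hdico with h | h
            · refine Or.inr (Or.inr (Or.inl ⟨by norm_num, ?_⟩))
              rw [he]
              exact h
            · refine Or.inr (Or.inr (Or.inr (Or.inl ⟨by norm_num, ?_⟩)))
              rw [he]
              exact h
    · -- there is an element of order 2^(n-1) : N ≃ ZMod 2 × ZMod 2^(n-1)
      push_neg at hP2
      obtain ⟨x, hx⟩ := hP2
      have hox : addOrderOf x = 2 ^ (n-1) :=
        order_of_crit (hP1 x) (by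
          have he : n - 1 - 1 = n - 2 := by omega
          rw [he]
          exact hx) (by omega)
      refine Or.inr (Or.inl ?_)
      have hcard : Nat.card N = 2 ^ ((n-1) + 1) := by
        rw [hN]
        congr 1
        omega
      exact construct_index_two (by omega) x hox hcard hP1
  · -- there is an element of order 2^n : N cyclic
    push_neg at hP1
    obtain ⟨x, hx⟩ := hP1
    have hup : 2 ^ n • x = 0 := by
      rw [← addOrderOf_dvd_iff_nsmul_eq_zero, ← hN]
      exact addOrderOf_dvd_natCard x
    have hox : addOrderOf x = 2 ^ n :=
      order_of_crit hup (by
        have he : n - 1 = n - 1 := rfl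
        exact hx) (by omega)
    exact Or.inl (construct_cyclic x hox hN)
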